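/- Let (ρ_x)_{x≥1} be i.i.d. strictly positive random variables with E[log ρ_1] ∈ (−∞, 0), and suppose there is a constant C > 0 such that P(R_1 ≥ t) ≥ C/t for all t ≥ 1, where R_m = Σ_{k=m}^∞ Π_{m,k} and Π_{i,j} = ∏_{x=i}^j ρ_x. Then for every n ≥ 1, E[ Π_{1,n} R_{n+1}² / (1 + R_1)² ] ≥ (C/4) · E[ 1/(1 + R_1) ] > 0. -/

import Mathlib

open MeasureTheory ProbabilityTheory
open scoped ENNReal

/-- The tail series `R_m = ∑_{k=m}^∞ Π_{m,k}` (valued in `ℝ≥0∞`), where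
`Π_{i,j} = ρ_i ⋯ ρ_j`. Here `ρ (j-1)` plays the role of `ρ_j`, so
`RSeries ρ m ω` is the paper's `R_{m+1}`. -/
noncomputable def RSeries {Ω : Type*} (ρ : ℕ → Ω → ℝ) (m : ℕ) (ω : Ω) : ℝ≥0∞ :=
  ∑' k : ℕ, ∏ j ∈ Finset.Ico m (m + k + 1), ENNReal.ofReal (ρ j ω)

/-- Truncated (partial sum) version, defined recursively. -/
noncomputable def TruncR {Ω : Type*} (ρ : ℕ → Ω → ℝ) : ℕ → ℕ → Ω → ℝ≥0∞
  | 0, _, _ => 0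
  | (N+1), m, ω => ENNReal.ofReal (ρ m ω) * (1 + TruncR ρ N (m+1) ω)

lemma TruncR_eq_sum {Ω : Type*} (ρ : ℕ → Ω → ℝ) :
    ∀ (N m : ℕ) (ω : Ω), TruncR ρ N m ω =
      ∑ k ∈ Finset.range N, ∏ j ∈ Finset.Ico m (m + k + 1), ENNReal.ofReal (ρ j ω) := by
  intro N
  induction N with
  | zero => intro m ω; simp [TruncR]
  | succ N ih =>
    intro m ω
    have hrw : ∀ k, m + 1 + k + 1 = m + (k + 1) + 1 := by omega
    rw [Finset.sum_range_succ']
    have h0 : ∏ j ∈ Finset.Ico m (m + 0 + 1), ENNReal.ofReal (ρ j ω)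
        = ENNReal.ofReal (ρ m ω) := by
      simp
    rw [h0]
    have hpeel : ∀ k : ℕ, ∏ j ∈ Finset.Ico m (m + (k + 1) + 1), ENNReal.ofReal (ρ j ω)
        = ENNReal.ofReal (ρ m ω) * ∏ j ∈ Finset.Ico (m+1) (m + 1 + k + 1), ENNReal.ofReal (ρ j ω) := by
      intro k
      rw [Finset.prod_eq_prod_Ico_succ_bot (by omega)]
      have h : m + (k + 1) + 1 = m + 1 + k + 1 := by omega
      rw [h]
    simp only [hpeel]
    rw [← Finset.mul_sum]
    rw [TruncR, ih (m+1) ω, mul_add, mul_one, add_comm]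

lemma TruncR_mono {Ω : Type*} (ρ : ℕ → Ω → ℝ) (m : ℕ) (ω : Ω) :
    Monotone (fun N => TruncR ρ N m ω) := by
  intro a b hab
  simp only [TruncR_eq_sum]
  exact Finset.sum_le_sum_of_subset (Finset.range_subset_range.mpr hab)

lemma RSeries_eq_iSup_TruncR {Ω : Type*} (ρ : ℕ → Ω → ℝ) (m : ℕ) (ω : Ω) :
    RSeries ρ m ω = ⨆ N, TruncR ρ N m ω := by
  rw [RSeries, ENNReal.tsum_eq_iSup_nat]
  simp [TruncR_eq_sum]

lemma measurable_RSeries_of {Ω : Type*} {m' : MeasurableSpace Ω} (ρ : ℕ → Ω → ℝ) (m : ℕ)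
    (h : ∀ j, m ≤ j → Measurable[m'] (ρ j)) : Measurable[m'] (RSeries ρ m) := by
  apply Measurable.ennreal_tsum
  intro k
  apply Finset.measurable_prod
  intro j hj
  exact ENNReal.measurable_ofReal.comp (h j (Finset.mem_Ico.mp hj).1)

lemma measurable_TruncR_of {Ω : Type*} (ρ : ℕ → Ω → ℝ) :
    ∀ (N m : ℕ) {m' : MeasurableSpace Ω},
      (∀ j, m ≤ j → Measurable[m'] (ρ j)) → Measurable[m'] (TruncR ρ N m) := by
  intro N
  induction N with
  | zero => intro m m' h; simpa [TruncR] using measurable_const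
  | succ N ih =>
    intro m m' h
    show Measurable[m'] fun ω => ENNReal.ofReal (ρ m ω) * (1 + TruncR ρ N (m+1) ω)
    exact (ENNReal.measurable_ofReal.comp (h m le_rfl)).mul
      (measurable_const.add (ih (m+1) (fun j hj => h j (by omega))))

section Main

variable {Ω : Type*} [MeasurableSpace Ω] {μ : Measure Ω} [IsProbabilityMeasure μ]
  {ρ : ℕ → Ω → ℝ}

lemma indepFun_TruncR (hmeas : ∀ i, Measurable (ρ i))
    (hindep : iIndepFun ρ μ) (N m : ℕ) :
    IndepFun (ρ m) (TruncR ρ N (m+1)) μ := by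
  have h_le : ∀ i, MeasurableSpace.comap (ρ i) inferInstance ≤ ‹MeasurableSpace Ω› :=
    fun i => (hmeas i).comap_le
  have hbig := indep_biSup_compl h_le hindep {m}
  have hleft : MeasurableSpace.comap (ρ m) inferInstance
      ≤ ⨆ i ∈ ({m} : Set ℕ), MeasurableSpace.comap (ρ i) inferInstance := by
    exact le_iSup₂ (f := fun i (_ : i ∈ ({m} : Set ℕ)) =>
      MeasurableSpace.comap (ρ i) inferInstance) m rfl
  have hright : MeasurableSpace.comap (TruncR ρ N (m+1)) inferInstance
      ≤ ⨆ i ∈ ({m} : Set ℕ)ᶜ, MeasurableSpace.comap (ρ i) inferInstance := by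
    rw [← measurable_iff_comap_le]
    apply measurable_TruncR_of
    intro j hj
    rw [measurable_iff_comap_le]
    exact le_iSup₂ (f := fun i (_ : i ∈ ({m} : Set ℕ)ᶜ) =>
      MeasurableSpace.comap (ρ i) inferInstance) j (by simp; omega)
  exact indep_of_indep_of_le_left (indep_of_indep_of_le_right hbig hright) hleft

lemma identDistrib_TruncR (hmeas : ∀ i, Measurable (ρ i))
    (hindep : iIndepFun ρ μ)
    (hident : ∀ i, IdentDistrib (ρ i) (ρ 0) μ μ) :
    ∀ (N m m' : ℕ), IdentDistrib (TruncR ρ N m) (TruncR ρ N m') μ μ := by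
  intro N
  induction N with
  | zero =>
    intro m m'
    exact ⟨aemeasurable_const, aemeasurable_const, rfl⟩
  | succ N ih =>
    intro m m'
    have hmT : ∀ k, Measurable (TruncR ρ N k) :=
      fun k => measurable_TruncR_of ρ N k (fun j _ => hmeas j)
    have hpair : IdentDistrib (fun ω => (ρ m ω, TruncR ρ N (m+1) ω))
        (fun ω => (ρ m' ω, TruncR ρ N (m'+1) ω)) μ μ := by
      refine ⟨((hmeas m).prodMk (hmT (m+1))).aemeasurable,
        ((hmeas m').prodMk (hmT (m'+1))).aemeasurable, ?_⟩
      have h1 := (indepFun_iff_map_prod_eq_prod_map_map (hmeas m).aemeasurable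
        (hmT (m+1)).aemeasurable).mp (indepFun_TruncR hmeas hindep N m)
      have h2 := (indepFun_iff_map_prod_eq_prod_map_map (hmeas m').aemeasurable
        (hmT (m'+1)).aemeasurable).mp (indepFun_TruncR hmeas hindep N m')
      rw [h1, h2, ((hident m).trans (hident m').symm).map_eq, (ih (m+1) (m'+1)).map_eq]
    have hφ : Measurable (fun x : ℝ × ℝ≥0∞ => ENNReal.ofReal x.1 * (1 + x.2)) :=
      (ENNReal.measurable_ofReal.comp measurable_fst).mul (measurable_snd.const_add 1)
    exact hpair.comp hφ

lemma measure_lt_RSeries_eq (hmeas : ∀ i, Measurable (ρ i))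
    (hindep : iIndepFun ρ μ)
    (hident : ∀ i, IdentDistrib (ρ i) (ρ 0) μ μ) (a : ℝ≥0∞) (m m' : ℕ) :
    μ {ω | a < RSeries ρ m ω} = μ {ω | a < RSeries ρ m' ω} := by
  have hset : ∀ k : ℕ, {ω | a < RSeries ρ k ω} = ⋃ N, {ω | a < TruncR ρ N k ω} := by
    intro k
    ext ω
    simp only [Set.mem_setOf_eq, Set.mem_iUnion, RSeries_eq_iSup_TruncR, lt_iSup_iff]
  have hm : ∀ (k : ℕ), Monotone (fun N => {ω | a < TruncR ρ N k ω}) := by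
    intro k N N' hNN' ω hω
    exact lt_of_lt_of_le hω (TruncR_mono ρ k ω hNN')
  rw [hset m, hset m', (hm m).directed_le.measure_iUnion,
    (hm m').directed_le.measure_iUnion]
  congr 1
  funext N
  have := (identDistrib_TruncR hmeas hindep hident N m m').measure_mem_eq
    (measurableSet_Ioi (a := a))
  simpa [Set.preimage, Set.mem_Ioi] using this

set_option maxHeartbeats 1000000 in
lemma RSeries_ae_lt_top (hmeas : ∀ i, Measurable (ρ i))
    (hpos : ∀ᵐ ω ∂μ, ∀ i, 0 < ρ i ω)
    (hindep : iIndepFun ρ μ)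
    (hident : ∀ i, IdentDistrib (ρ i) (ρ 0) μ μ)
    (hlogint : Integrable (fun ω => Real.log (ρ 0 ω)) μ)
    (hlogneg : ∫ ω, Real.log (ρ 0 ω) ∂μ < 0) (m : ℕ) :
    ∀ᵐ ω ∂μ, RSeries ρ m ω < ∞ := by
  set L := ∫ ω, Real.log (ρ 0 ω) ∂μ with hL
  set X : ℕ → Ω → ℝ := fun i ω => Real.log (ρ (m + i) ω) with hX
  have hXident : ∀ i, IdentDistrib (X i) (X 0) μ μ := fun i =>
    ((hident (m + i)).trans (hident (m + 0)).symm).comp Real.measurable_log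
  have hXint : Integrable (X 0) μ :=
    ((hident (m + 0)).comp Real.measurable_log).integrable_iff.mpr hlogint
  have hXindep : Pairwise (Function.onFun (IndepFun · · μ) X) := fun i j hij =>
    (hindep.indepFun (show m + i ≠ m + j by omega)).comp
      Real.measurable_log Real.measurable_log
  have hint_eq : (μ[X 0]) = L := ((hident (m + 0)).comp Real.measurable_log).integral_eq
  have hslln := strong_law_ae X hXint hXindep hXident
  filter_upwards [hslln, hpos] with ω hT hp
  rw [hint_eq] at hT
  obtain ⟨K, hK⟩ := Filter.eventually_atTop.mp (hT.eventually_lt_const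
    (show L < L / 2 by linarith))
  set r := Real.exp (L / 2) with hr
  have hr0 : 0 < r := Real.exp_pos _
  have hr1 : r < 1 := by rw [hr, Real.exp_lt_one_iff]; linarith
  have hterm : ∀ k, (∏ j ∈ Finset.Ico m (m + k + 1), ENNReal.ofReal (ρ j ω))
      = ENNReal.ofReal (Real.exp (∑ i ∈ Finset.range (k + 1), X i ω)) := by
    intro k
    rw [← ENNReal.ofReal_prod_of_nonneg (fun i _ => (hp i).le)]
    congr 1
    rw [Real.exp_sum, Finset.prod_Ico_eq_prod_range]
    have hk1 : m + k + 1 - m = k + 1 := by omega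
    rw [hk1]
    exact Finset.prod_congr rfl fun i _ => (Real.exp_log (hp (m + i))).symm
  have hbound : ∀ k, K ≤ k + 1 →
      (∏ j ∈ Finset.Ico m (m + k + 1), ENNReal.ofReal (ρ j ω))
        ≤ ENNReal.ofReal (r ^ (k + 1)) := by
    intro k hk
    rw [hterm k]
    apply ENNReal.ofReal_le_ofReal
    rw [← Real.exp_nat_mul]
    apply Real.exp_le_exp.mpr
    have h1 := hK (k + 1) hk
    have h2 : (0:ℝ) < (k + 1 : ℕ) := by positivity
    rw [smul_eq_mul, inv_mul_lt_iff₀ h2] at h1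
    calc ∑ i ∈ Finset.range (k + 1), X i ω ≤ L / 2 * ((k:ℝ) + 1) := by
          push_cast at h1 ⊢; linarith
      _ = ((k + 1 : ℕ) : ℝ) * (L / 2) := by push_cast; ring
  rw [RSeries]
  rw [(HasSum.sum_range_add (f := fun k => ∏ j ∈ Finset.Ico m (m + k + 1),
    ENNReal.ofReal (ρ j ω)) (k := K) ENNReal.summable.hasSum).tsum_eq]
  apply ENNReal.add_lt_top.mpr
  constructor
  · refine ENNReal.sum_lt_top.mpr fun k _ => ?_
    rw [hterm k]
    exact ENNReal.ofReal_lt_top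
  · calc ∑' k : ℕ, ∏ j ∈ Finset.Ico m (m + (k + K) + 1), ENNReal.ofReal (ρ j ω)
        ≤ ∑' k : ℕ, ENNReal.ofReal (r ^ k) := by
          apply ENNReal.tsum_le_tsum
          intro k
          refine (hbound (k + K) (by omega)).trans (ENNReal.ofReal_le_ofReal ?_)
          exact pow_le_pow_of_le_one hr0.le hr1.le (by omega)
      _ = ENNReal.ofReal (∑' k : ℕ, r ^ k) :=
          (ENNReal.ofReal_tsum_of_nonneg (fun k => pow_nonneg hr0.le k)
            (summable_geometric_of_lt_one hr0.le hr1)).symm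
      _ < ∞ := ENNReal.ofReal_lt_top

lemma RSeries_zero_split (ρ : ℕ → Ω → ℝ) (n : ℕ) (ω : Ω) :
    1 + RSeries ρ 0 ω =
      (1 + ∑ k ∈ Finset.range (n+1), ∏ j ∈ Finset.range (k+1), ENNReal.ofReal (ρ j ω))
        + (∏ j ∈ Finset.range (n+1), ENNReal.ofReal (ρ j ω)) * RSeries ρ (n+1) ω := by
  have h0 : RSeries ρ 0 ω = ∑' k, ∏ j ∈ Finset.range (k+1), ENNReal.ofReal (ρ j ω) := by
    rw [RSeries]
    refine tsum_congr fun k => ?_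
    rw [Finset.range_eq_Ico]
    norm_num
  rw [h0, (HasSum.sum_range_add (f := fun k => ∏ j ∈ Finset.range (k+1),
    ENNReal.ofReal (ρ j ω)) (k := n+1) ENNReal.summable.hasSum).tsum_eq]
  have htail : (∑' i : ℕ, ∏ j ∈ Finset.range (i + (n+1) + 1), ENNReal.ofReal (ρ j ω))
      = (∏ j ∈ Finset.range (n+1), ENNReal.ofReal (ρ j ω)) * RSeries ρ (n+1) ω := by
    rw [RSeries, ← ENNReal.tsum_mul_left]
    refine tsum_congr fun i => ?_
    rw [← Finset.prod_range_mul_prod_Ico (fun j => ENNReal.ofReal (ρ j ω))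
      (show n+1 ≤ i + (n+1) + 1 by omega)]
    have h : i + (n+1) + 1 = n+1+i+1 := by omega
    rw [h]
  rw [htail, add_assoc]

lemma tail_bound_shift (hmeas : ∀ i, Measurable (ρ i))
    (hindep : iIndepFun ρ μ)
    (hident : ∀ i, IdentDistrib (ρ i) (ρ 0) μ μ)
    {C : ℝ}
    (htail : ∀ t : ℝ, 1 ≤ t →
      ENNReal.ofReal (C / t) ≤ μ {ω | ENNReal.ofReal t ≤ RSeries ρ 0 ω}) (m : ℕ) :
    ∀ t : ℝ, 1 ≤ t →
      ENNReal.ofReal (C / t) ≤ μ {ω | ENNReal.ofReal t ≤ RSeries ρ m ω} := by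
  intro t ht
  have htpos : (0:ℝ) < t := lt_of_lt_of_le one_pos ht
  have hbound : ∀ k : ℕ, ENNReal.ofReal (C / (t + 1/((k:ℝ)+1)))
      ≤ μ {ω | ENNReal.ofReal t ≤ RSeries ρ m ω} := by
    intro k
    set t' := t + 1/((k:ℝ)+1) with ht'
    have hklt : (0:ℝ) < 1/((k:ℝ)+1) := by positivity
    have ht'1 : 1 ≤ t' := ht.trans (le_add_of_nonneg_right hklt.le)
    calc ENNReal.ofReal (C / t') ≤ μ {ω | ENNReal.ofReal t' ≤ RSeries ρ 0 ω} := htail t' ht'1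
      _ ≤ μ {ω | ENNReal.ofReal t < RSeries ρ 0 ω} := by
          apply measure_mono
          intro ω hω
          exact lt_of_lt_of_le ((ENNReal.ofReal_lt_ofReal_iff (by linarith)).mpr
            (by simp only [ht']; linarith)) hω
      _ = μ {ω | ENNReal.ofReal t < RSeries ρ m ω} :=
          measure_lt_RSeries_eq hmeas hindep hident (ENNReal.ofReal t) 0 m
      _ ≤ μ {ω | ENNReal.ofReal t ≤ RSeries ρ m ω} := measure_mono
          fun ω (h : ENNReal.ofReal t < RSeries ρ m ω) => h.le
  have htendR : Filter.Tendsto (fun k : ℕ => C / (t + 1/((k:ℝ)+1)))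
      Filter.atTop (nhds (C / t)) := by
    have h1 : Filter.Tendsto (fun k : ℕ => t + 1/((k:ℝ)+1)) Filter.atTop (nhds t) := by
      have := tendsto_const_nhds (x := t) (f := Filter.atTop (α := ℕ)).add
        tendsto_one_div_add_atTop_nhds_zero_nat
      simpa using this
    exact Filter.Tendsto.div tendsto_const_nhds h1 (ne_of_gt htpos)
  exact le_of_tendsto (ENNReal.tendsto_ofReal htendR) (Filter.Eventually.of_forall hbound)

end Main

/-- **Uniform term-wise lower bound.** Let `(ρ_x)_{x≥1}` be i.i.d. strictly positive
with `E[log ρ₁] ∈ (-∞,0)`, and suppose `P(R₁ ≥ t) ≥ C/t` for all `t ≥ 1` for some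
constant `C > 0`. Then for every `n ≥ 1`,
`E[Π_{1,n} R_{n+1}² / (1 + R₁)²] ≥ (C/4) E[1/(1 + R₁)] > 0`. -/
theorem term_lower_bound
    {Ω : Type*} [MeasurableSpace Ω] (μ : Measure Ω) [IsProbabilityMeasure μ]
    (ρ : ℕ → Ω → ℝ) (hmeas : ∀ i, Measurable (ρ i))
    (hpos : ∀ᵐ ω ∂μ, ∀ i, 0 < ρ i ω)
    (hindep : iIndepFun ρ μ)
    (hident : ∀ i, IdentDistrib (ρ i) (ρ 0) μ μ)
    (hlogint : Integrable (fun ω => Real.log (ρ 0 ω)) μ)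
    (hlogneg : ∫ ω, Real.log (ρ 0 ω) ∂μ < 0)
    (C : ℝ) (hC : 0 < C)
    (htail : ∀ t : ℝ, 1 ≤ t →
      ENNReal.ofReal (C / t) ≤ μ {ω | ENNReal.ofReal t ≤ RSeries ρ 0 ω}) :
    ∀ n : ℕ,
      ENNReal.ofReal (C / 4) * (∫⁻ ω, (1 + RSeries ρ 0 ω)⁻¹ ∂μ)
          ≤ ∫⁻ ω, (∏ j ∈ Finset.range (n + 1), ENNReal.ofReal (ρ j ω)) *
              (RSeries ρ (n + 1) ω) ^ 2 / (1 + RSeries ρ 0 ω) ^ 2 ∂μ ∧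
        0 < ENNReal.ofReal (C / 4) * (∫⁻ ω, (1 + RSeries ρ 0 ω)⁻¹ ∂μ) := by
  intro n
  set P : Ω → ℝ≥0∞ := fun ω => ∏ j ∈ Finset.range (n+1), ENNReal.ofReal (ρ j ω) with hP
  set Tt : Ω → ℝ≥0∞ := fun ω =>
    1 + ∑ k ∈ Finset.range (n+1), ∏ j ∈ Finset.range (k+1), ENNReal.ofReal (ρ j ω) with hTt
  set W : Ω → ℝ≥0∞ := fun ω => RSeries ρ (n+1) ω with hWdef
  have hPm : Measurable P :=
    Finset.measurable_prod _ fun j _ => ENNReal.measurable_ofReal.comp (hmeas j)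
  have hTm : Measurable Tt := measurable_const.add (Finset.measurable_sum _ fun k _ =>
    Finset.measurable_prod _ fun j _ => ENNReal.measurable_ofReal.comp (hmeas j))
  have hWm : Measurable W := measurable_RSeries_of ρ (n+1) fun j _ => hmeas j
  have hRm : Measurable (RSeries ρ 0) := measurable_RSeries_of ρ 0 fun j _ => hmeas j
  have hid : ∀ ω, 1 + RSeries ρ 0 ω = Tt ω + P ω * W ω := fun ω => RSeries_zero_split ρ n ω
  have hT1 : ∀ ω, 1 ≤ Tt ω := fun ω => le_self_add
  have hTtop : ∀ ω, Tt ω ≠ ∞ := by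
    intro ω
    refine ENNReal.add_ne_top.mpr ⟨ENNReal.one_ne_top, ?_⟩
    exact (ENNReal.sum_lt_top.mpr fun k _ =>
      ENNReal.prod_lt_top fun j _ => ENNReal.ofReal_lt_top).ne
  have hPT : ∀ ω, P ω ≤ Tt ω := by
    intro ω
    refine le_trans ?_ (le_add_self)
    exact Finset.single_le_sum
      (f := fun k => ∏ j ∈ Finset.range (k+1), ENNReal.ofReal (ρ j ω))
      (fun k _ => zero_le) (Finset.self_mem_range_succ n)
  have hPtop : ∀ ω, P ω ≠ ∞ := fun ω =>
    (lt_of_le_of_lt (hPT ω) (lt_top_iff_ne_top.mpr (hTtop ω))).ne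
  have hPpos : ∀ ω, (∀ i, 0 < ρ i ω) → 0 < P ω := fun ω hρ =>
    CanonicallyOrderedAdd.prod_pos.mpr fun j _ => ENNReal.ofReal_pos.mpr (hρ j)
  have hWfin : ∀ᵐ ω ∂μ, W ω < ∞ :=
    RSeries_ae_lt_top hmeas hpos hindep hident hlogint hlogneg (n+1)
  have hRfin : ∀ᵐ ω ∂μ, RSeries ρ 0 ω < ∞ :=
    RSeries_ae_lt_top hmeas hpos hindep hident hlogint hlogneg 0
  set G : (ℝ≥0∞ × ℝ≥0∞) × ℝ≥0∞ → ℝ≥0∞ :=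
    fun q => if q.1.2 / q.1.1 ≤ q.2 then (4 * q.1.1)⁻¹ else 0 with hG
  have hGm : Measurable G := by
    apply Measurable.ite
    · exact measurableSet_le ((measurable_fst.snd).div (measurable_fst.fst)) measurable_snd
    · exact (measurable_const.mul measurable_fst.fst).inv
    · exact measurable_const
  set Z : Ω → ℝ≥0∞ × ℝ≥0∞ := fun ω => (P ω, Tt ω) with hZ
  have hZm : Measurable Z := hPm.prodMk hTm
  -- pointwise bound
  have hptwise : ∀ᵐ ω ∂μ, G (Z ω, W ω) ≤ P ω * W ω ^ 2 / (1 + RSeries ρ 0 ω) ^ 2 := by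
    filter_upwards [hpos, hWfin] with ω hρ hWf
    by_cases hcond : Tt ω / P ω ≤ W ω
    · have hp0 : P ω ≠ 0 := (hPpos ω hρ).ne'
      have hpt : P ω ≠ ∞ := hPtop ω
      have hT0 : Tt ω ≠ 0 := by
        intro h
        have h1 := hT1 ω
        rw [h] at h1
        simp at h1
      have hw0 : W ω ≠ 0 := by
        intro h
        rw [h] at hcond
        exact absurd hcond (not_le.mpr (ENNReal.div_pos hT0 hpt))
      have hTle : Tt ω ≤ P ω * W ω := by
        calc Tt ω = P ω * (Tt ω / P ω) := (ENNReal.mul_div_cancel hp0 hpt).symm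
          _ ≤ P ω * W ω := mul_le_mul_right hcond _
      have hsum : 1 + RSeries ρ 0 ω ≤ 2 * (P ω * W ω) := by
        rw [hid ω, two_mul]
        exact add_le_add_left hTle _
      have ha0 : P ω * W ω ^ 2 ≠ 0 := by
        simp only [ne_eq, mul_eq_zero, pow_eq_zero_iff, not_or]
        exact ⟨hp0, by simp [hw0]⟩
      have hatop : P ω * W ω ^ 2 ≠ ∞ :=
        ENNReal.mul_ne_top hpt (ENNReal.pow_ne_top hWf.ne)
      have hkey : G (Z ω, W ω) = (4 * P ω)⁻¹ := by simp [hG, hZ, hcond]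
      rw [hkey]
      calc (4 * P ω)⁻¹ = (1 * (P ω * W ω ^ 2)) / ((4 * P ω) * (P ω * W ω ^ 2)) := by
            rw [ENNReal.mul_div_mul_right _ _ ha0 hatop, one_div]
        _ = (P ω * W ω ^ 2) / (2 * (P ω * W ω)) ^ 2 := by
            rw [one_mul]
            congr 1
            ring
        _ ≤ P ω * W ω ^ 2 / (1 + RSeries ρ 0 ω) ^ 2 :=
            ENNReal.div_le_div_left (pow_le_pow_left₀ zero_le hsum 2) _
    · simp [hG, hZ, hcond]
  have step1 : ∫⁻ ω, G (Z ω, W ω) ∂μ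
      ≤ ∫⁻ ω, P ω * W ω ^ 2 / (1 + RSeries ρ 0 ω) ^ 2 ∂μ := lintegral_mono_ae hptwise
  -- independence
  have h_le : ∀ i, MeasurableSpace.comap (ρ i) inferInstance ≤ ‹MeasurableSpace Ω› :=
    fun i => (hmeas i).comap_le
  have hbig := indep_biSup_compl h_le hindep {i | i ≤ n}
  have hρM : ∀ j, j ≤ n →
      Measurable[⨆ i ∈ {i : ℕ | i ≤ n}, MeasurableSpace.comap (ρ i) inferInstance] (ρ j) :=
    fun j hj => measurable_iff_comap_le.mpr
      (le_iSup₂ (f := fun i (_ : i ∈ {i : ℕ | i ≤ n}) =>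
        MeasurableSpace.comap (ρ i) inferInstance) j hj)
  have hZle : MeasurableSpace.comap Z inferInstance
      ≤ ⨆ i ∈ {i : ℕ | i ≤ n}, MeasurableSpace.comap (ρ i) inferInstance := by
    rw [← measurable_iff_comap_le]
    refine Measurable.prodMk ?_ ?_
    · exact Finset.measurable_prod _ fun j hj => ENNReal.measurable_ofReal.comp
        (hρM j (by simpa [Nat.lt_succ_iff] using Finset.mem_range.mp hj))
    · refine Measurable.add measurable_const (Finset.measurable_sum _ fun k hk =>
        Finset.measurable_prod _ fun j hj => ENNReal.measurable_ofReal.comp (hρM j ?_))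
      have hk' := Finset.mem_range.mp hk
      have hj' := Finset.mem_range.mp hj
      omega
  have hWle : MeasurableSpace.comap W inferInstance
      ≤ ⨆ i ∈ {i : ℕ | i ≤ n}ᶜ, MeasurableSpace.comap (ρ i) inferInstance := by
    rw [← measurable_iff_comap_le]
    refine measurable_RSeries_of ρ (n+1) fun j hj => measurable_iff_comap_le.mpr ?_
    exact le_iSup₂ (f := fun i (_ : i ∈ {i : ℕ | i ≤ n}ᶜ) =>
      MeasurableSpace.comap (ρ i) inferInstance) j (by simp; omega)
  have hindepZW : IndepFun Z W μ :=
    indep_of_indep_of_le_left (indep_of_indep_of_le_right hbig hWle) hZle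
  have hmap : μ.map (fun ω => (Z ω, W ω)) = (μ.map Z).prod (μ.map W) :=
    (indepFun_iff_map_prod_eq_prod_map_map hZm.aemeasurable hWm.aemeasurable).mp hindepZW
  haveI : IsProbabilityMeasure (μ.map Z) := Measure.isProbabilityMeasure_map hZm.aemeasurable
  haveI : IsProbabilityMeasure (μ.map W) := Measure.isProbabilityMeasure_map hWm.aemeasurable
  have step2 : ∫⁻ ω, G (Z ω, W ω) ∂μ
      = ∫⁻ z, ∫⁻ w, G (z, w) ∂(μ.map W) ∂(μ.map Z) := by
    rw [← lintegral_map hGm (hZm.prodMk hWm), hmap, lintegral_prod _ hGm.aemeasurable]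
  -- inner bound
  have hinner : ∀ᵐ z ∂(μ.map Z),
      ENNReal.ofReal (C/4) * z.2⁻¹ ≤ ∫⁻ w, G (z, w) ∂(μ.map W) := by
    have hSmeas : MeasurableSet {z : ℝ≥0∞ × ℝ≥0∞ |
        0 < z.1 ∧ z.1 ≤ z.2 ∧ z.2 ≠ ∞ ∧ 1 ≤ z.2} := by
      have h1 : MeasurableSet {z : ℝ≥0∞ × ℝ≥0∞ | 0 < z.1} :=
        measurableSet_lt measurable_const measurable_fst
      have h2 : MeasurableSet {z : ℝ≥0∞ × ℝ≥0∞ | z.1 ≤ z.2} :=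
        measurableSet_le measurable_fst measurable_snd
      have h3 : MeasurableSet {z : ℝ≥0∞ × ℝ≥0∞ | z.2 ≠ ∞} :=
        (measurable_snd (measurableSet_singleton (∞ : ℝ≥0∞))).compl
      have h4 : MeasurableSet {z : ℝ≥0∞ × ℝ≥0∞ | 1 ≤ z.2} :=
        measurableSet_le measurable_const measurable_snd
      simp only [Set.setOf_and]
      exact h1.inter (h2.inter (h3.inter h4))
    have hzprop : ∀ᵐ z ∂(μ.map Z), 0 < z.1 ∧ z.1 ≤ z.2 ∧ z.2 ≠ ∞ ∧ 1 ≤ z.2 := by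
      rw [ae_map_iff hZm.aemeasurable hSmeas]
      filter_upwards [hpos] with ω hρ
      exact ⟨hPpos ω hρ, hPT ω, hTtop ω, hT1 ω⟩
    filter_upwards [hzprop] with z hz
    obtain ⟨hz1, hz12, hz2top, hz21⟩ := hz
    have hz1top : z.1 ≠ ∞ := (lt_of_le_of_lt hz12 (lt_top_iff_ne_top.mpr hz2top)).ne
    have hz20 : z.2 ≠ 0 := fun h => by simp [h] at hz21
    set s := z.2 / z.1 with hs
    have hstop : s ≠ ∞ := (ENNReal.div_lt_top hz2top hz1.ne').ne
    have hs1 : 1 ≤ s := by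
      rw [hs, ENNReal.le_div_iff_mul_le (Or.inl hz1.ne') (Or.inl hz1top), one_mul]
      exact hz12
    set tr := s.toReal with htrdef
    have htr1 : (1:ℝ) ≤ tr := by
      rw [htrdef, ← ENNReal.toReal_one]
      exact ENNReal.toReal_mono hstop hs1
    have hofr : ENNReal.ofReal tr = s := ENNReal.ofReal_toReal hstop
    have hinnerEval : ∫⁻ w, G (z, w) ∂(μ.map W) = (4 * z.1)⁻¹ * (μ.map W) (Set.Ici s) := by
      have hfun : (fun w => G (z, w))
          = Set.indicator (Set.Ici s) (fun _ => (4 * z.1)⁻¹) := by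
        funext w
        simp only [hG, Set.indicator_apply, Set.mem_Ici, hs]
      rw [hfun, lintegral_indicator measurableSet_Ici, setLIntegral_const]
    have hmeasIci : (μ.map W) (Set.Ici s) = μ {ω | s ≤ W ω} := by
      rw [Measure.map_apply hWm measurableSet_Ici]
      rfl
    have htailW : ENNReal.ofReal (C / tr) ≤ (μ.map W) (Set.Ici s) := by
      rw [hmeasIci, ← hofr]
      exact tail_bound_shift hmeas hindep hident htail (n+1) tr htr1
    -- arithmetic
    set p := z.1.toReal with hpdef
    set t := z.2.toReal with htdef
    have hp : (0:ℝ) < p := ENNReal.toReal_pos hz1.ne' hz1top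
    have ht : (0:ℝ) < t := ENNReal.toReal_pos hz20 hz2top
    have htr : tr = t / p := by rw [htrdef, hs, ENNReal.toReal_div]
    have h41 : (4 * z.1)⁻¹ = ENNReal.ofReal (4 * p)⁻¹ := by
      rw [ENNReal.ofReal_inv_of_pos (by positivity), ENNReal.ofReal_mul (by norm_num),
        ENNReal.ofReal_toReal hz1top]
      norm_num
    have hz2inv : z.2⁻¹ = ENNReal.ofReal t⁻¹ := by
      rw [ENNReal.ofReal_inv_of_pos ht, ENNReal.ofReal_toReal hz2top]
    calc ENNReal.ofReal (C/4) * z.2⁻¹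
        = ENNReal.ofReal ((4 * p)⁻¹ * (C / tr)) := by
          rw [hz2inv, ← ENNReal.ofReal_mul (by positivity), htr]
          congr 1
          field_simp
      _ = (4 * z.1)⁻¹ * ENNReal.ofReal (C / tr) := by
          rw [h41, ← ENNReal.ofReal_mul (by positivity)]
      _ ≤ (4 * z.1)⁻¹ * (μ.map W) (Set.Ici s) := mul_le_mul_right htailW _
      _ = ∫⁻ w, G (z, w) ∂(μ.map W) := hinnerEval.symm
  have step3 : ∫⁻ z, ENNReal.ofReal (C/4) * z.2⁻¹ ∂(μ.map Z)
      ≤ ∫⁻ z, ∫⁻ w, G (z, w) ∂(μ.map W) ∂(μ.map Z) := lintegral_mono_ae hinner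
  have step4 : ∫⁻ z, ENNReal.ofReal (C/4) * z.2⁻¹ ∂(μ.map Z)
      = ENNReal.ofReal (C/4) * ∫⁻ ω, (Tt ω)⁻¹ ∂μ := by
    rw [lintegral_map (show Measurable fun z : ℝ≥0∞ × ℝ≥0∞ => ENNReal.ofReal (C/4) * z.2⁻¹ from
      measurable_snd.inv.const_mul _) hZm,
      lintegral_const_mul _ (show Measurable fun ω => (Tt ω)⁻¹ from hTm.inv)]
  have step5 : ∫⁻ ω, (1 + RSeries ρ 0 ω)⁻¹ ∂μ ≤ ∫⁻ ω, (Tt ω)⁻¹ ∂μ := by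
    refine lintegral_mono fun ω => ?_
    refine ENNReal.inv_le_inv' ?_
    rw [hid ω]
    exact le_self_add
  have hfinal : ENNReal.ofReal (C / 4) * (∫⁻ ω, (1 + RSeries ρ 0 ω)⁻¹ ∂μ)
      ≤ ∫⁻ ω, P ω * W ω ^ 2 / (1 + RSeries ρ 0 ω) ^ 2 ∂μ := by
    calc ENNReal.ofReal (C / 4) * (∫⁻ ω, (1 + RSeries ρ 0 ω)⁻¹ ∂μ)
        ≤ ENNReal.ofReal (C / 4) * ∫⁻ ω, (Tt ω)⁻¹ ∂μ := mul_le_mul_right step5 _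
      _ = ∫⁻ z, ENNReal.ofReal (C/4) * z.2⁻¹ ∂(μ.map Z) := step4.symm
      _ ≤ ∫⁻ z, ∫⁻ w, G (z, w) ∂(μ.map W) ∂(μ.map Z) := step3
      _ = ∫⁻ ω, G (Z ω, W ω) ∂μ := step2.symm
      _ ≤ _ := step1
  refine ⟨hfinal, ?_⟩
  have hC4 : ENNReal.ofReal (C/4) ≠ 0 := by
    simp only [ne_eq, ENNReal.ofReal_eq_zero, not_le]
    positivity
  have hIpos : (∫⁻ ω, (1 + RSeries ρ 0 ω)⁻¹ ∂μ) ≠ 0 := by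
    intro h0
    rw [lintegral_eq_zero_iff (show Measurable fun ω => (1 + RSeries ρ 0 ω)⁻¹ from
      (hRm.const_add 1).inv)] at h0
    have hfalse : ∀ᵐ ω ∂μ, False := by
      filter_upwards [h0, hRfin] with ω h1 h2
      have : (1:ℝ≥0∞) + RSeries ρ 0 ω = ∞ := ENNReal.inv_eq_zero.mp h1
      rw [ENNReal.add_eq_top] at this
      rcases this with h | h
      · exact ENNReal.one_ne_top h
      · exact h2.ne h
    rw [ae_iff] at hfalse
    simp at hfalse
  exact ENNReal.mul_pos hC4 hIpos
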